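/- Let p be a prime, n = 2k, δ ∈ F_{p^k}, f(x) = x^{p^k} + x + δ, γ ∈ F_{p^n}^* with T^n_k(γ) = γ + γ^{p^k} = 0, and s any integer. Then F(x) = γ·(f(x))^s + x is a permutation of F_{p^n}, and more generally x ↦ L(γ)·(f(x))^s + L(x) is a permutation of F_{p^n} for any F_{p^k}-linear permutation L. Moreover F^{−1}(x) = x + (p−1)·γ·(f(x))^s, and F is an involution if and only if p = 2. -/

import Mathlib

/-- **Proposition 6.2 (the case `b = 0`).** Let `n = 2k`, `δ ∈ F_{p^k}`,
`f(x) = x^{p^k} + x + δ`, and `γ ∈ F_{p^n}^*` with `T^n_k(γ) = γ + γ^{p^k} = 0`.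
Then for any integer `s`, `F(x) = γ·(f(x))^s + x` is a permutation of `F_{p^n}`,
and more generally `x ↦ L(γ)·(f(x))^s + L(x)` is a permutation for any
`F_{p^k}`-linear permutation `L`.  Moreover `F^{−1}(x) = x + (p−1)·γ·(f(x))^s`,
and `F` is an involution iff `p = 2`. -/
theorem stmt_16 {p k n : ℕ} (hp : p.Prime) (hk : 0 < k) (hn : n = 2 * k)
    {F : Type*} [Field F] [Fintype F] (hcard : Fintype.card F = p ^ n)
    (δ : F) (hδ : δ ^ p ^ k = δ) (γ : F) (hγ : γ ≠ 0) (hγT : γ + γ ^ p ^ k = 0)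
    (s : ℕ) :
    Function.Bijective (fun x : F => γ * (x ^ p ^ k + x + δ) ^ s + x) ∧
    (∀ (L : F → F) (l0 l1 : F), (∀ x, L x = l0 * x + l1 * x ^ p ^ k) →
      Function.Bijective L →
      Function.Bijective (fun x : F => L γ * (x ^ p ^ k + x + δ) ^ s + L x)) ∧
    Function.LeftInverse
      (fun x : F => x + ((p - 1 : ℕ) : F) * γ * (x ^ p ^ k + x + δ) ^ s)
      (fun x : F => γ * (x ^ p ^ k + x + δ) ^ s + x) ∧
    Function.RightInverse
      (fun x : F => x + ((p - 1 : ℕ) : F) * γ * (x ^ p ^ k + x + δ) ^ s)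
      (fun x : F => γ * (x ^ p ^ k + x + δ) ^ s + x) ∧
    ((∀ x : F, (fun y : F => γ * (y ^ p ^ k + y + δ) ^ s + y)
        ((fun y : F => γ * (y ^ p ^ k + y + δ) ^ s + y) x) = x) ↔ p = 2) := by
  haveI : Fact p.Prime := ⟨hp⟩
  have hn0 : 0 < n := by omega
  -- characteristic
  have hpF : (p : F) = 0 := by
    have h0 : ((Fintype.card F : ℕ) : F) = 0 := Nat.cast_card_eq_zero F
    rw [hcard, Nat.cast_pow] at h0
    exact pow_eq_zero_iff hn0.ne' |>.mp h0
  have hrc : ringChar F = p := CharP.ringChar_of_prime_eq_zero hp hpF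
  haveI hchar : CharP F p := hrc ▸ ringChar.charP F
  -- x ^ p ^ n = x
  have hxn : ∀ x : F, x ^ p ^ n = x := fun x => by
    rw [← hcard]; exact FiniteField.pow_card x
  have hx2k : ∀ x : F, (x ^ p ^ k) ^ p ^ k = x := fun x => by
    rw [← pow_mul, ← pow_add, ← two_mul, ← hn]; exact hxn x
  -- the value f(x) lies in F_{p^k}
  have hfk : ∀ x : F, (x ^ p ^ k + x + δ) ^ p ^ k = x ^ p ^ k + x + δ := by
    intro x
    rw [add_pow_char_pow, add_pow_char_pow, hx2k, hδ]
    ring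
  have hγk : γ ^ p ^ k = -γ := by linear_combination hγT
  -- the key computation : f (γ' * f(x)^s + x) = f(x) whenever γ'^{p^k} = -γ'
  have key : ∀ γ' : F, γ' ^ p ^ k = -γ' → ∀ x : F,
      ((γ' * (x ^ p ^ k + x + δ) ^ s + x) ^ p ^ k
        + (γ' * (x ^ p ^ k + x + δ) ^ s + x) + δ) = x ^ p ^ k + x + δ := by
    intro γ' hγ' x
    rw [add_pow_char_pow, mul_pow, ← pow_mul, mul_comm s (p ^ k), pow_mul, hfk, hγ']
    ring
  -- (p-1 : F) = -1
  have hpm1 : ((p - 1 : ℕ) : F) = -1 := by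
    rw [Nat.cast_sub hp.one_le, CharP.cast_eq_zero F p]; simp
  -- left and right inverse
  have hLI : Function.LeftInverse
      (fun x : F => x + ((p - 1 : ℕ) : F) * γ * (x ^ p ^ k + x + δ) ^ s)
      (fun x : F => γ * (x ^ p ^ k + x + δ) ^ s + x) := by
    intro x
    simp only [hpm1, key γ hγk x]
    ring
  have hRI : Function.RightInverse
      (fun x : F => x + ((p - 1 : ℕ) : F) * γ * (x ^ p ^ k + x + δ) ^ s)
      (fun x : F => γ * (x ^ p ^ k + x + δ) ^ s + x) := by
    intro x
    have hγ'k : (-γ) ^ p ^ k = -(-γ) := by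
      have := sub_pow_char_pow (R := F) (p := p) (x := (0 : F)) (y := γ) (n := k)
      simp only [zero_sub, zero_pow (pow_ne_zero k hp.pos.ne')] at this
      rw [this, hγk, neg_neg]
    have h := key (-γ) hγ'k x
    simp only [hpm1]
    have hrw : x + (-1 : F) * γ * (x ^ p ^ k + x + δ) ^ s
        = -γ * (x ^ p ^ k + x + δ) ^ s + x := by ring
    rw [hrw, h]
    ring
  have hbij : Function.Bijective (fun x : F => γ * (x ^ p ^ k + x + δ) ^ s + x) :=
    Function.bijective_iff_has_inverse.mpr ⟨_, hLI, hRI⟩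
  refine ⟨hbij, ?_, hLI, hRI, ?_⟩
  · -- the L-version
    intro L l0 l1 hL hLbij
    have : (fun x : F => L γ * (x ^ p ^ k + x + δ) ^ s + L x)
        = L ∘ (fun x : F => γ * (x ^ p ^ k + x + δ) ^ s + x) := by
      funext x
      simp only [Function.comp_apply, hL]
      rw [add_pow_char_pow, mul_pow, ← pow_mul, mul_comm s (p ^ k), pow_mul, hfk, hγk]
      ring
    rw [this]
    exact hLbij.comp hbij
  · -- involution iff p = 2
    constructor
    · intro h
      -- find x₀ with f(x₀) ≠ 0
      obtain ⟨x₀, hx₀⟩ : ∃ x₀ : F, x₀ ^ p ^ k + x₀ + δ ≠ 0 := by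
        have hq : (Polynomial.X ^ p ^ k + Polynomial.X + Polynomial.C δ : Polynomial F) ≠ 0 := by
          intro hq0
          have := congrArg (fun q => Polynomial.coeff q (p ^ k)) hq0
          have hpk1 : p ^ k ≠ 1 := by
            have : 2 ≤ p ^ k := by
              calc 2 ≤ p := hp.two_le
              _ ≤ p ^ k := Nat.le_self_pow hk.ne' p
            omega
          have hpk0 : p ^ k ≠ 0 := pow_ne_zero k hp.pos.ne'
          simp [Polynomial.coeff_X_pow, Polynomial.coeff_X, Polynomial.coeff_C,
            hpk1, hpk0, Ne.symm hpk1, hp.ne_zero] at this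
        have hdeg : (Polynomial.X ^ p ^ k + Polynomial.X + Polynomial.C δ
            : Polynomial F).natDegree < Cardinal.mk F := by
          have h1 : (Polynomial.X ^ p ^ k + Polynomial.X + Polynomial.C δ
              : Polynomial F).natDegree ≤ p ^ k := by
            apply le_trans (Polynomial.natDegree_add_le _ _)
            simp only [sup_le_iff, max_le_iff]
            refine ⟨le_trans (Polynomial.natDegree_add_le _ _) ?_, ?_⟩
            · simp [Polynomial.natDegree_X_pow, Polynomial.natDegree_X_le]
              have : 1 ≤ p ^ k := Nat.one_le_iff_ne_zero.mpr (pow_ne_zero k hp.pos.ne')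
              omega
            · simp [Polynomial.natDegree_C]
          have h2 : p ^ k < p ^ n := by
            apply Nat.pow_lt_pow_right hp.one_lt
            omega
          have : (Polynomial.X ^ p ^ k + Polynomial.X + Polynomial.C δ
              : Polynomial F).natDegree < Fintype.card F := by
            rw [hcard]; omega
          calc ((Polynomial.X ^ p ^ k + Polynomial.X + Polynomial.C δ
              : Polynomial F).natDegree : Cardinal) < (Fintype.card F : Cardinal) := by
                exact_mod_cast this
          _ = Cardinal.mk F := (Cardinal.mk_fintype F).symm
        obtain ⟨r, hr⟩ := Polynomial.exists_eval_ne_zero_of_natDegree_lt_card _ hq hdeg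
        refine ⟨r, ?_⟩
        simpa using hr
      have h0 := h x₀
      simp only at h0
      rw [key γ hγk x₀] at h0
      have h2 : (2 : F) * (γ * (x₀ ^ p ^ k + x₀ + δ) ^ s) = 0 := by
        linear_combination h0
      have hne : γ * (x₀ ^ p ^ k + x₀ + δ) ^ s ≠ 0 :=
        mul_ne_zero hγ (pow_ne_zero s hx₀)
      have h2' : (2 : F) = 0 := by
        rcases mul_eq_zero.mp h2 with h | h
        · exact h
        · exact absurd h hne
      have : (p : ℕ) ∣ 2 := by
        have := (CharP.cast_eq_zero_iff F p 2).mp (by exact_mod_cast h2')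
        exact this
      exact ((Nat.prime_dvd_prime_iff_eq hp Nat.prime_two).mp this)
    · intro hp2
      subst hp2
      intro x
      simp only
      rw [key γ hγk x]
      have h2 : (2 : F) = 0 := by exact_mod_cast CharP.cast_eq_zero F 2
      linear_combination (γ * (x ^ 2 ^ k + x + δ) ^ s) * h2
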